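/- Let X be a path metric space and U an open cover of dimension at most n with Lebesgue number R > 0, and let g : X → ℓ²(U) satisfy ‖g(x) − g(y)‖₂ ≤ 4(n+1)·d(x,y)/R for all x, y with d(x,y) ≤ R, together with the property that whenever d(x,y) ≤ R, g(x) and g(y) lie in simplices of the nerve sharing a common vertex. Then with respect to the Euclidean path length metric d_pl on the nerve |U|, one has d_pl(g(x), g(y)) ≤ C_n · d(x,y)/R for all x, y ∈ X, where C_n = 12·√(2n+1)·(n+1). -/

import Mathlib

open scoped ENNReal
open Set

noncomputable section NerveAux

variable {F : Type*} [NormedAddCommGroup F] [NormedSpace ℝ F]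

/-- There is a path from `a` to `b` inside `N` of length at most `L`. -/
def NervePathLe (N : Set F) (a b : F) (L : ℝ≥0∞) : Prop :=
  ∃ γ : ℝ → F, ContinuousOn γ (Icc 0 1) ∧ γ 0 = a ∧ γ 1 = b ∧
    (∀ u ∈ Icc (0:ℝ) 1, γ u ∈ N) ∧ eVariationOn γ (Icc 0 1) ≤ L

theorem NervePathLe.mono {N : Set F} {a b : F} {L L' : ℝ≥0∞}
    (h : NervePathLe N a b L) (hL : L ≤ L') : NervePathLe N a b L' := by
  obtain ⟨γ, h1, h2, h3, h4, h5⟩ := h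
  exact ⟨γ, h1, h2, h3, h4, h5.trans hL⟩

theorem nervePathLe_refl {N : Set F} {a : F} (ha : a ∈ N) : NervePathLe N a a 0 := by
  refine ⟨fun _ => a, continuousOn_const, rfl, rfl, fun u _ => ha, ?_⟩
  rw [eVariationOn.constant_on (by simp [Set.Subsingleton] : ((fun _ => a) '' Icc (0:ℝ) 1).Subsingleton)]

theorem nervePathLe_segment {N : Set F} {a b : F}
    (h : ∀ t ∈ Icc (0:ℝ) 1, a + t • (b - a) ∈ N) :
    NervePathLe N a b (ENNReal.ofReal ‖b - a‖) := by
  refine ⟨fun t => a + t • (b - a), ?_, by simp, by simp, h, ?_⟩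
  · exact (continuous_const.add (continuous_id.smul continuous_const)).continuousOn
  · have hlip : LipschitzWith ‖b - a‖₊ (fun t : ℝ => a + t • (b - a)) := by
      apply LipschitzWith.of_dist_le_mul
      intro s t
      have : (a + s • (b - a)) - (a + t • (b - a)) = (s - t) • (b - a) := by
        module
      rw [dist_eq_norm, this, norm_smul, dist_eq_norm]
      rw [Real.norm_eq_abs, coe_nnnorm]
      exact le_of_eq (by ring)
    have h1 : eVariationOn id (Icc (0:ℝ) 1) ≤ ENNReal.ofReal 1 := by
      have := (monotoneOn_id (s := Icc (0:ℝ) 1)).eVariationOn_le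
        (left_mem_Icc.2 zero_le_one) (right_mem_Icc.2 zero_le_one)
      simpa using this
    have h2 := (hlip.lipschitzOnWith (s := univ)).comp_eVariationOn_le
      (g := (id : ℝ → ℝ)) (s := Icc (0:ℝ) 1) (mapsTo_univ _ _)
    have h3 : eVariationOn (fun t : ℝ => a + t • (b - a)) (Icc 0 1)
        ≤ ↑‖b - a‖₊ * ENNReal.ofReal 1 := by
      refine le_trans ?_ (mul_le_mul_right h1 _)
      exact h2
    calc eVariationOn (fun t : ℝ => a + t • (b - a)) (Icc 0 1)
        ≤ ↑‖b - a‖₊ * ENNReal.ofReal 1 := h3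
      _ = ENNReal.ofReal ‖b - a‖ := by
          rw [ENNReal.ofReal_one, mul_one, ← coe_nnnorm, ENNReal.ofReal_coe_nnreal]


theorem continuousOn_union_closed' {α β : Type*} [TopologicalSpace α] [TopologicalSpace β]
    {f : α → β} {s t : Set α} (hs : IsClosed s) (ht : IsClosed t)
    (hfs : ContinuousOn f s) (hft : ContinuousOn f t) : ContinuousOn f (s ∪ t) := by
  intro x hx
  apply ContinuousWithinAt.union
  · by_cases hxs : x ∈ s
    · exact hfs x hxs
    · exact continuousWithinAt_of_notMem_closure (by rwa [hs.closure_eq])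
  · by_cases hxt : x ∈ t
    · exact hft x hxt
    · exact continuousWithinAt_of_notMem_closure (by rwa [ht.closure_eq])

theorem image_two_mul_Icc' : (fun u : ℝ => 2 * u) '' Icc 0 (1/2) = Icc 0 1 := by
  ext v
  simp only [mem_image, mem_Icc]
  constructor
  · rintro ⟨u, ⟨h1, h2⟩, rfl⟩; constructor <;> linarith
  · rintro ⟨h1, h2⟩; exact ⟨v/2, ⟨by linarith, by linarith⟩, by ring⟩

theorem image_two_mul_sub_Icc' : (fun u : ℝ => 2 * u - 1) '' Icc (1/2) 1 = Icc 0 1 := by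
  ext v
  simp only [mem_image, mem_Icc]
  constructor
  · rintro ⟨u, ⟨h1, h2⟩, rfl⟩; constructor <;> linarith
  · rintro ⟨h1, h2⟩; exact ⟨(v+1)/2, ⟨by linarith, by linarith⟩, by ring⟩

theorem NervePathLe.trans {N : Set F} {a b c : F} {L₁ L₂ : ℝ≥0∞}
    (h₁ : NervePathLe N a b L₁) (h₂ : NervePathLe N b c L₂) :
    NervePathLe N a c (L₁ + L₂) := by
  obtain ⟨γ₁, c₁, s₁, e₁, m₁, v₁⟩ := h₁
  obtain ⟨γ₂, c₂, s₂, e₂, m₂, v₂⟩ := h₂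
  classical
  set γ : ℝ → F := fun t => if t ≤ 1/2 then γ₁ (2*t) else γ₂ (2*t - 1) with hγ
  have maps₁ : MapsTo (fun u : ℝ => 2*u) (Icc 0 (1/2)) (Icc 0 1) := by
    rintro u ⟨h1, h2⟩; exact ⟨by dsimp; linarith, by dsimp; linarith⟩
  have maps₂ : MapsTo (fun u : ℝ => 2*u - 1) (Icc (1/2) 1) (Icc 0 1) := by
    rintro u ⟨h1, h2⟩; exact ⟨by dsimp; linarith, by dsimp; linarith⟩
  have eq₁ : EqOn γ (γ₁ ∘ fun u => 2*u) (Icc 0 (1/2)) := by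
    rintro u ⟨h1, h2⟩
    simp only [hγ, Function.comp_apply, if_pos h2]
  have eq₂ : EqOn γ (γ₂ ∘ fun u => 2*u - 1) (Icc (1/2) 1) := by
    rintro u ⟨h1, h2⟩
    by_cases h : u ≤ 1/2
    · have hu : u = 1/2 := le_antisymm h h1
      simp only [hγ, Function.comp_apply, if_pos h, hu]
      norm_num [e₁, s₂]
    · simp only [hγ, Function.comp_apply, if_neg h]
  have hunion : Icc (0:ℝ) (1/2) ∪ Icc (1/2) 1 = Icc 0 1 :=
    Icc_union_Icc_eq_Icc (by norm_num) (by norm_num)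
  have cont : ContinuousOn γ (Icc 0 1) := by
    rw [← hunion]
    apply continuousOn_union_closed' isClosed_Icc isClosed_Icc
    · refine ContinuousOn.congr ?_ eq₁
      exact ContinuousOn.comp (t := Icc (0:ℝ) 1) (c₁)
        ((continuous_const.mul continuous_id).continuousOn) maps₁
    · refine ContinuousOn.congr ?_ eq₂
      exact ContinuousOn.comp (t := Icc (0:ℝ) 1) (c₂)
        (((continuous_const.mul continuous_id).sub continuous_const).continuousOn) maps₂
  have memN : ∀ u ∈ Icc (0:ℝ) 1, γ u ∈ N := by
    intro u hu
    by_cases h : u ≤ 1/2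
    · have : u ∈ Icc (0:ℝ) (1/2) := ⟨hu.1, h⟩
      rw [eq₁ this]
      exact m₁ _ (maps₁ this)
    · have : u ∈ Icc (1/2:ℝ) 1 := ⟨le_of_not_ge h, hu.2⟩
      rw [eq₂ this]
      exact m₂ _ (maps₂ this)
  have hmono₁ : MonotoneOn (fun u : ℝ => 2*u) (Icc 0 (1/2)) := by
    intro u _ v _ huv; dsimp; linarith
  have hmono₂ : MonotoneOn (fun u : ℝ => 2*u - 1) (Icc (1/2) 1) := by
    intro u _ v _ huv; dsimp; linarith
  have var : eVariationOn γ (Icc 0 1) ≤ L₁ + L₂ := by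
    have key := eVariationOn.Icc_add_Icc γ (s := Icc (0:ℝ) 1)
      (a := 0) (b := 1/2) (c := 1) (by norm_num) (by norm_num) (by constructor <;> norm_num)
    rw [inter_eq_self_of_subset_right (Icc_subset_Icc le_rfl (by norm_num)),
      inter_eq_self_of_subset_right (Icc_subset_Icc (by norm_num) le_rfl),
      inter_self] at key
    rw [← key]
    have V1 : eVariationOn γ (Icc 0 (1/2)) ≤ L₁ := by
      rw [eVariationOn.eq_of_eqOn eq₁, eVariationOn.comp_eq_of_monotoneOn γ₁ _ hmono₁,
        image_two_mul_Icc']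
      exact v₁
    have V2 : eVariationOn γ (Icc (1/2) 1) ≤ L₂ := by
      rw [eVariationOn.eq_of_eqOn eq₂, eVariationOn.comp_eq_of_monotoneOn γ₂ _ hmono₂,
        image_two_mul_sub_Icc']
      exact v₂
    exact add_le_add V1 V2
  refine ⟨γ, cont, ?_, ?_, memN, var⟩
  · show (if (0:ℝ) ≤ 1/2 then γ₁ (2*0) else γ₂ (2*0-1)) = a
    norm_num [s₁]
  · show (if (1:ℝ) ≤ 1/2 then γ₁ (2*1) else γ₂ (2*1-1)) = c
    norm_num [e₂]

theorem NervePathLe.chain {N : Set F} (z : ℕ → F) (L : ℕ → ℝ≥0∞)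
    (k : ℕ) (h : ∀ i < k, NervePathLe N (z i) (z (i+1)) (L i)) (h0 : z 0 ∈ N) :
    NervePathLe N (z 0) (z k) (∑ i ∈ Finset.range k, L i) := by
  induction k with
  | zero =>
    simp only [Finset.range_zero, Finset.sum_empty]
    exact ⟨fun _ => z 0, continuousOn_const, rfl, rfl, fun u _ => h0, by
      rw [eVariationOn.constant_on (by simp [Set.Subsingleton] :
        ((fun _ => z 0) '' Icc (0:ℝ) 1).Subsingleton)]⟩
  | succ k ih =>
    rw [Finset.sum_range_succ]
    exact (ih (fun i hi => h i (Nat.lt_succ_of_lt hi))).trans (h k (Nat.lt_succ_self k))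


section LpAux
variable {ι : Type*}
theorem lp_norm_sq_eq_sum (f : lp (fun _ : ι => ℝ) 2) (S : Finset ι)
    (h : ∀ i ∉ S, f i = 0) : ‖f‖ ^ 2 = ∑ i ∈ S, (f i) ^ 2 := by
  have hp : (0:ℝ) < (2:ℝ≥0∞).toReal := by norm_num
  have key := lp.norm_rpow_eq_tsum hp f
  have h2 : (2:ℝ≥0∞).toReal = (2:ℝ) := by norm_num
  rw [h2] at key
  have hsum : ∑' i, ‖f i‖ ^ (2:ℝ) = ∑ i ∈ S, ‖f i‖ ^ (2:ℝ) := by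
    apply tsum_eq_sum
    intro i hi
    rw [h i hi]
    simp
  rw [hsum] at key
  have : ∀ a : ℝ, a ^ (2:ℝ) = a ^ 2 := fun a => by
    rw [show ((2:ℝ)) = ((2:ℕ):ℝ) by norm_num, Real.rpow_natCast]
  calc ‖f‖ ^ 2 = ‖f‖ ^ (2:ℝ) := (this _).symm
    _ = ∑ i ∈ S, ‖f i‖ ^ (2:ℝ) := key
    _ = ∑ i ∈ S, (f i) ^ 2 := by
        apply Finset.sum_congr rfl
        intro i _
        rw [this, Real.norm_eq_abs, sq_abs]

theorem lp_apply_sum_single [DecidableEq ι] (S : Finset ι) (w : ι → ℝ) (j : ι) :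
    (∑ U ∈ S, lp.single 2 U (w U)) j = if j ∈ S then w j else 0 := by
  rw [lp.coeFn_sum, Finset.sum_apply]
  have : ∀ U ∈ S, (lp.single (E := fun _ : ι => ℝ) 2 U (w U)) j
      = if j = U then w U else 0 := by
    intro U _
    by_cases h : j = U
    · subst h; simp [lp.single_apply_self]
    · simp [lp.single_apply_ne _ _ _ h, h]
  rw [Finset.sum_congr rfl this, Finset.sum_ite_eq S j w]


theorem nervePathLe_shared_vertex (n : ℕ)
    (N : Set (lp (fun _ : ι => ℝ) 2))
    (p q : lp (fun _ : ι => ℝ) 2) (σ τ : Finset ι) (V : ι)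
    (hVσ : V ∈ σ) (hVτ : V ∈ τ) (hσcard : σ.card ≤ n + 1)
    (hpsupp : ∀ U, U ∉ σ → p U = 0) (hqsupp : ∀ U, U ∉ τ → q U = 0)
    (hpnn : ∀ U, 0 ≤ p U) (hqnn : ∀ U, 0 ≤ q U)
    (hpsum : ∑ U ∈ σ, p U = 1) (hqsum : ∑ U ∈ τ, q U = 1)
    (hσN : ∀ z : lp (fun _ : ι => ℝ) 2, (∀ U, U ∉ σ → z U = 0) → (∀ U, 0 ≤ z U) →
      (∑ U ∈ σ, z U) = 1 → z ∈ N)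
    (hτN : ∀ z : lp (fun _ : ι => ℝ) 2, (∀ U, U ∉ τ → z U = 0) → (∀ U, 0 ≤ z U) →
      (∑ U ∈ τ, z U) = 1 → z ∈ N) :
    NervePathLe N p q
      (ENNReal.ofReal ((1 + 2 * Real.sqrt ((n:ℝ)+1)) * ‖p - q‖)) := by
  classical
  set m : ℝ := ∑ U ∈ σ \ τ, p U with hm
  have hm0 : 0 ≤ m := Finset.sum_nonneg fun U _ => hpnn U
  set w : ι → ℝ := fun U => if U = V then p V + m else p U with hw
  set ph : lp (fun _ : ι => ℝ) 2 := ∑ U ∈ σ ∩ τ, lp.single 2 U (w U) with hphdef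
  have hph : ∀ j, ph j = if j ∈ σ ∩ τ then w j else 0 := by
    intro j; rw [hphdef]; exact lp_apply_sum_single _ _ _
  have hVστ : V ∈ σ ∩ τ := Finset.mem_inter.2 ⟨hVσ, hVτ⟩
  -- sum of w over σ ∩ τ is 1
  have hwsum : ∑ U ∈ σ ∩ τ, w U = 1 := by
    have e1 : ∑ U ∈ σ ∩ τ, w U = w V + ∑ U ∈ (σ ∩ τ).erase V, w U :=
      (Finset.add_sum_erase _ w hVστ).symm
    have e2 : ∑ U ∈ σ ∩ τ, p U = p V + ∑ U ∈ (σ ∩ τ).erase V, p U :=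
      (Finset.add_sum_erase _ p hVστ).symm
    have e3 : ∑ U ∈ (σ ∩ τ).erase V, w U = ∑ U ∈ (σ ∩ τ).erase V, p U := by
      apply Finset.sum_congr rfl
      intro U hU
      have : U ≠ V := Finset.ne_of_mem_erase hU
      simp [hw, this]
    have e4 : ∑ U ∈ σ ∩ τ, p U + ∑ U ∈ σ \ τ, p U = ∑ U ∈ σ, p U :=
      Finset.sum_inter_add_sum_sdiff σ τ p
    have hwV : w V = p V + m := by simp [hw]
    rw [e1, e3, hwV]
    have := hpsum
    rw [← e4] at this
    rw [e2] at this
    linarith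
  -- coordinates facts for ph
  have hphsupp_στ : ∀ U, U ∉ σ ∩ τ → ph U = 0 := by
    intro U hU; rw [hph U, if_neg hU]
  have hphsuppσ : ∀ U, U ∉ σ → ph U = 0 := fun U hU =>
    hphsupp_στ U (fun h => hU (Finset.mem_inter.1 h).1)
  have hphsuppτ : ∀ U, U ∉ τ → ph U = 0 := fun U hU =>
    hphsupp_στ U (fun h => hU (Finset.mem_inter.1 h).2)
  have hphnn : ∀ U, 0 ≤ ph U := by
    intro U
    rw [hph U]
    by_cases h : U ∈ σ ∩ τ
    · rw [if_pos h]
      simp only [hw]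
      by_cases hUV : U = V
      · rw [if_pos hUV]; exact add_nonneg (hpnn V) hm0
      · rw [if_neg hUV]; exact hpnn U
    · rw [if_neg h]
  have hphsum : ∀ S : Finset ι, σ ∩ τ ⊆ S → ∑ U ∈ S, ph U = 1 := by
    intro S hS
    rw [← Finset.sum_subset hS (fun U _ hU => hphsupp_στ U hU)]
    rw [Finset.sum_congr rfl (fun U hU => by rw [hph U, if_pos hU])]
    exact hwsum
  -- coordinate formula for points on segments
  have hcoord : ∀ (t : ℝ) (a b : lp (fun _ : ι => ℝ) 2) (j : ι),
      (a + t • (b - a)) j = a j + t * (b j - a j) := by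
    intro t a b j
    have h1 : (a + t • (b - a)) j = a j + (t • (b - a)) j := by
      rw [lp.coeFn_add]; rfl
    have h2 : (t • (b - a)) j = t * ((b - a) j) := by
      rw [lp.coeFn_smul]; rfl
    have h3 : (b - a) j = b j - a j := by rw [lp.coeFn_sub]; rfl
    rw [h1, h2, h3]
  -- segment 1 stays in N
  have seg1 : ∀ t ∈ Icc (0:ℝ) 1, p + t • (ph - p) ∈ N := by
    rintro t ⟨ht0, ht1⟩
    apply hσN
    · intro U hU
      rw [hcoord, hpsupp U hU, hphsuppσ U hU]; ring
    · intro U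
      rw [hcoord]
      have : p U + t * (ph U - p U) = (1 - t) * p U + t * ph U := by ring
      rw [this]
      have := hpnn U; have := hphnn U
      nlinarith
    · rw [Finset.sum_congr rfl (fun U _ => hcoord t p ph U)]
      rw [Finset.sum_add_distrib, ← Finset.mul_sum, Finset.sum_sub_distrib]
      rw [hpsum, hphsum σ Finset.inter_subset_left]
      ring
  -- segment 2 stays in N
  have seg2 : ∀ t ∈ Icc (0:ℝ) 1, ph + t • (q - ph) ∈ N := by
    rintro t ⟨ht0, ht1⟩
    apply hτN
    · intro U hU
      rw [hcoord, hqsupp U hU, hphsuppτ U hU]; ring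
    · intro U
      rw [hcoord]
      have : ph U + t * (q U - ph U) = (1 - t) * ph U + t * q U := by ring
      rw [this]
      have := hqnn U; have := hphnn U
      nlinarith
    · rw [Finset.sum_congr rfl (fun U _ => hcoord t ph q U)]
      rw [Finset.sum_add_distrib, ← Finset.mul_sum, Finset.sum_sub_distrib]
      rw [hqsum, hphsum τ Finset.inter_subset_right]
      ring
  -- norm estimates
  have hsub : ∀ (a b : lp (fun _ : ι => ℝ) 2) (j : ι), (a - b) j = a j - b j := by
    intro a b j; rw [lp.coeFn_sub]; rfl
  have hpq_normsq : ‖p - q‖ ^ 2 = ∑ U ∈ σ ∪ τ, (p U - q U) ^ 2 := by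
    rw [lp_norm_sq_eq_sum (p - q) (σ ∪ τ) (fun U hU => by
      rw [hsub, hpsupp U (fun h => hU (Finset.mem_union_left _ h)),
        hqsupp U (fun h => hU (Finset.mem_union_right _ h))]; ring)]
    exact Finset.sum_congr rfl fun U _ => by rw [hsub]
  have hT : ∑ U ∈ σ \ τ, (p U - q U) ^ 2 ≤ ‖p - q‖ ^ 2 := by
    rw [hpq_normsq]
    apply Finset.sum_le_sum_of_subset_of_nonneg
    · intro U hU
      exact Finset.mem_union_left _ (Finset.mem_sdiff.1 hU).1
    · intro U _ _; positivity
  have hTp : ∑ U ∈ σ \ τ, (p U - q U) ^ 2 = ∑ U ∈ σ \ τ, (p U) ^ 2 := by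
    apply Finset.sum_congr rfl
    intro U hU
    rw [hqsupp U (Finset.mem_sdiff.1 hU).2]; ring
  -- card bound
  have hcard : ((σ \ τ).card : ℝ) ≤ n := by
    have h1 : σ \ τ ⊆ σ.erase V := by
      intro U hU
      rcases Finset.mem_sdiff.1 hU with ⟨h2, h3⟩
      exact Finset.mem_erase.2 ⟨fun h => h3 (h ▸ hVτ), h2⟩
    have h2 : (σ \ τ).card ≤ n := by
      have := Finset.card_le_card h1
      rw [Finset.card_erase_of_mem hVσ] at this
      omega
    exact_mod_cast h2
  have hmsq : m ^ 2 ≤ (n:ℝ) * ∑ U ∈ σ \ τ, (p U) ^ 2 := by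
    have h1 : m ^ 2 ≤ ((σ \ τ).card : ℝ) * ∑ U ∈ σ \ τ, (p U) ^ 2 := by
      rw [hm]
      exact sq_sum_le_card_mul_sum_sq
    refine h1.trans (mul_le_mul_of_nonneg_right hcard ?_)
    positivity
  have hphp_normsq : ‖ph - p‖ ^ 2 = m ^ 2 + ∑ U ∈ σ \ τ, (p U) ^ 2 := by
    rw [lp_norm_sq_eq_sum (ph - p) σ (fun U hU => by
      rw [hsub, hphsuppσ U hU, hpsupp U hU]; ring)]
    rw [← Finset.sum_inter_add_sum_sdiff σ τ (fun U => ((ph - p) U) ^ 2)]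
    congr 1
    · have : ∀ U ∈ σ ∩ τ, ((ph - p) U) ^ 2 = if U = V then m ^ 2 else 0 := by
        intro U hU
        rw [hsub, hph U, if_pos hU]
        simp only [hw]
        by_cases hUV : U = V
        · rw [if_pos hUV, if_pos hUV, hUV]; ring
        · rw [if_neg hUV, if_neg hUV]; ring
      rw [Finset.sum_congr rfl this, Finset.sum_ite_eq' (σ ∩ τ) V (fun _ => m ^ 2),
        if_pos hVστ]
    · apply Finset.sum_congr rfl
      intro U hU
      have h1 : U ∉ σ ∩ τ := fun h => (Finset.mem_sdiff.1 hU).2 (Finset.mem_inter.1 h).2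
      rw [hsub, hphsupp_στ U h1]
      ring
  have key1 : ‖ph - p‖ ^ 2 ≤ ((n:ℝ) + 1) * ‖p - q‖ ^ 2 := by
    rw [hphp_normsq]
    have := hT
    rw [hTp] at this
    nlinarith
  have hsq : Real.sqrt ((n:ℝ)+1) ^ 2 = (n:ℝ)+1 := Real.sq_sqrt (by positivity)
  have key1' : ‖ph - p‖ ≤ Real.sqrt ((n:ℝ)+1) * ‖p - q‖ := by
    have h1 := Real.sqrt_le_sqrt key1
    rw [Real.sqrt_sq (norm_nonneg _), Real.sqrt_mul (by positivity : (0:ℝ) ≤ (n:ℝ)+1),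
      Real.sqrt_sq (norm_nonneg _)] at h1
    exact h1
  have key2 : ‖q - ph‖ ≤ ‖p - q‖ + ‖ph - p‖ := by
    have : q - ph = (q - p) + (p - ph) := by abel
    rw [this]
    calc ‖(q - p) + (p - ph)‖ ≤ ‖q - p‖ + ‖p - ph‖ := norm_add_le _ _
      _ = ‖p - q‖ + ‖ph - p‖ := by rw [norm_sub_rev q p, norm_sub_rev p ph]
  -- assemble
  have P1 := nervePathLe_segment seg1
  have P2 := nervePathLe_segment seg2
  refine (P1.trans P2).mono ?_
  rw [← ENNReal.ofReal_add (norm_nonneg _) (norm_nonneg _)]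
  apply ENNReal.ofReal_le_ofReal
  have hs := Real.sqrt_nonneg ((n:ℝ)+1)
  nlinarith [norm_nonneg (p - q)]

end LpAux

theorem numeric_ineq (n : ℕ) : 1 + 2 * Real.sqrt ((n:ℝ)+1) ≤ 3 * Real.sqrt (2*(n:ℝ)+1) := by
  have hs : Real.sqrt ((n:ℝ)+1) ^ 2 = (n:ℝ)+1 := Real.sq_sqrt (by positivity)
  have ht : Real.sqrt (2*(n:ℝ)+1) ^ 2 = 2*(n:ℝ)+1 := Real.sq_sqrt (by positivity)
  have hs0 : 0 ≤ Real.sqrt ((n:ℝ)+1) := Real.sqrt_nonneg _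
  have ht0 : 0 ≤ Real.sqrt (2*(n:ℝ)+1) := Real.sqrt_nonneg _
  have hsle : Real.sqrt ((n:ℝ)+1) ≤ (n:ℝ)+1 := by
    have h1 : ((n:ℝ)+1) ≤ ((n:ℝ)+1)^2 := by nlinarith [Nat.cast_nonneg (α := ℝ) n]
    have := Real.sqrt_le_sqrt h1
    rwa [Real.sqrt_sq (by positivity)] at this
  nlinarith [Nat.cast_nonneg (α := ℝ) n, sq_nonneg (Real.sqrt ((n:ℝ)+1) - Real.sqrt (2*(n:ℝ)+1)),
    mul_nonneg hs0 ht0]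


end NerveAux

/-- Lemma on maps to the nerve: if `X` is a path metric space, `𝒰` an open cover of
dimension at most `n` with Lebesgue number `R > 0`, and `g : X → ℓ²(𝒰)` maps into the
nerve `N`, satisfies `‖g(x) − g(y)‖₂ ≤ 4(n+1)d(x,y)/R` whenever `d(x,y) ≤ R`, and sends
points at distance at most `R` into simplices sharing a common vertex, then for the
Euclidean path length metric `d_pl` on the nerve,
`d_pl(g(x),g(y)) ≤ 12√(2n+1)(n+1)·d(x,y)/R` for all `x, y`. -/
theorem nerve_map_path_length_estimate
    {X : Type*} [MetricSpace X] (n : ℕ) (R : ℝ) (hR : 0 < R)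
    (𝒰 : Set (Set X))
    (hopen : ∀ U ∈ 𝒰, IsOpen U)
    (hcover : ⋃₀ 𝒰 = Set.univ)
    (hmult : ∀ x : X, {U | U ∈ 𝒰 ∧ x ∈ U}.encard ≤ (n : ℕ∞) + 1)
    (hleb : ∀ x : X, ∃ U ∈ 𝒰, Metric.closedBall x R ⊆ U)
    -- `X` is a path metric space:
    (hpath : ∀ x y : X, ∀ ε > (0 : ℝ), ∃ γ : ℝ → X,
      ContinuousOn γ (Set.Icc 0 1) ∧ γ 0 = x ∧ γ 1 = y ∧
      eVariationOn γ (Set.Icc 0 1) ≤ ENNReal.ofReal (dist x y + ε))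
    (g : X → lp (fun _ : ↥𝒰 => ℝ) 2)
    -- Lipschitz-type estimate at scale `≤ R`:
    (hlip : ∀ x y : X, dist x y ≤ R → ‖g x - g y‖ ≤ 4 * (n + 1) * dist x y / R)
    -- nearby points land in simplices of the nerve sharing a common vertex:
    (hshare : ∀ x y : X, dist x y ≤ R → ∃ σ τ : Finset ↥𝒰,
      σ.card ≤ n + 1 ∧ τ.card ≤ n + 1 ∧ (∃ V : ↥𝒰, V ∈ σ ∧ V ∈ τ) ∧
      (⋂ U ∈ σ, (U : Set X)).Nonempty ∧ (⋂ U ∈ τ, (U : Set X)).Nonempty ∧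
      (∀ U : ↥𝒰, U ∉ σ → g x U = 0) ∧ (∀ U : ↥𝒰, U ∉ τ → g y U = 0) ∧
      (∀ U : ↥𝒰, 0 ≤ g x U) ∧ (∀ U : ↥𝒰, 0 ≤ g y U) ∧
      (∑ U ∈ σ, g x U) = 1 ∧ (∑ U ∈ τ, g y U) = 1)
    -- the geometric realization of the nerve inside `ℓ²(𝒰)`:
    (N : Set (lp (fun _ : ↥𝒰 => ℝ) 2))
    (hN : N = {z | ∃ T : Finset ↥𝒰, (⋂ U ∈ T, (U : Set X)).Nonempty ∧
      (∀ U : ↥𝒰, U ∉ T → z U = 0) ∧ (∀ U : ↥𝒰, 0 ≤ z U) ∧ (∑ U ∈ T, z U) = 1})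
    (hgN : ∀ x : X, g x ∈ N)
    -- the Euclidean path length metric on the nerve:
    (dpl : lp (fun _ : ↥𝒰 => ℝ) 2 → lp (fun _ : ↥𝒰 => ℝ) 2 → ℝ≥0∞)
    (hdpl : dpl = fun a b => sInf {L : ℝ≥0∞ | ∃ γ : ℝ → lp (fun _ : ↥𝒰 => ℝ) 2,
      ContinuousOn γ (Set.Icc 0 1) ∧ γ 0 = a ∧ γ 1 = b ∧
      (∀ u ∈ Set.Icc (0 : ℝ) 1, γ u ∈ N) ∧ L = eVariationOn γ (Set.Icc 0 1)})
    (x y : X) :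
    dpl (g x) (g y) ≤
      ENNReal.ofReal (12 * Real.sqrt (2 * n + 1) * (n + 1) * dist x y / R) := by
  classical
  set C : ℝ := 12 * Real.sqrt (2 * (n:ℝ) + 1) * ((n:ℝ) + 1) with hC
  have hC0 : 0 < C := by
    have h1 : (0:ℝ) < Real.sqrt (2 * (n:ℝ) + 1) := Real.sqrt_pos.2 (by positivity)
    positivity
  -- dpl is bounded by any nerve-path length
  have dpl_le : ∀ a b L, NervePathLe N a b L → dpl a b ≤ L := by
    rintro a b L ⟨γ, h1, h2, h3, h4, h5⟩
    rw [hdpl]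
    exact le_trans (sInf_le ⟨γ, h1, h2, h3, h4, rfl⟩) h5
  -- pairwise estimate
  have pair : ∀ a b : X, dist a b ≤ R →
      NervePathLe N (g a) (g b) (ENNReal.ofReal (C * dist a b / R)) := by
    intro a b hab
    obtain ⟨σ, τ, hcσ, hcτ, ⟨V, hVσ, hVτ⟩, hneσ, hneτ, hsa, hsb, hna, hnb, hsuma, hsumb⟩ :=
      hshare a b hab
    have hσN : ∀ z : lp (fun _ : ↥𝒰 => ℝ) 2, (∀ U, U ∉ σ → z U = 0) → (∀ U, 0 ≤ z U) →
        (∑ U ∈ σ, z U) = 1 → z ∈ N := by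
      intro z h1 h2 h3
      rw [hN]; exact ⟨σ, hneσ, h1, h2, h3⟩
    have hτN : ∀ z : lp (fun _ : ↥𝒰 => ℝ) 2, (∀ U, U ∉ τ → z U = 0) → (∀ U, 0 ≤ z U) →
        (∑ U ∈ τ, z U) = 1 → z ∈ N := by
      intro z h1 h2 h3
      rw [hN]; exact ⟨τ, hneτ, h1, h2, h3⟩
    refine (nervePathLe_shared_vertex n N (g a) (g b) σ τ V hVσ hVτ hcσ hsa hsb hna hnb
      hsuma hsumb hσN hτN).mono ?_
    apply ENNReal.ofReal_le_ofReal
    have h1 := hlip a b hab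
    have h2 := numeric_ineq n
    have h3 : (0:ℝ) ≤ 1 + 2 * Real.sqrt ((n:ℝ)+1) := by positivity
    have h4 : (0:ℝ) ≤ dist a b := dist_nonneg
    have h5 : (0:ℝ) ≤ 4 * ((n:ℝ) + 1) * dist a b / R := by positivity
    calc (1 + 2 * Real.sqrt ((n:ℝ)+1)) * ‖g a - g b‖
        ≤ (1 + 2 * Real.sqrt ((n:ℝ)+1)) * (4 * ((n:ℝ) + 1) * dist a b / R) := by
          exact mul_le_mul_of_nonneg_left h1 h3
      _ ≤ (3 * Real.sqrt (2*(n:ℝ)+1)) * (4 * ((n:ℝ) + 1) * dist a b / R) :=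
          mul_le_mul_of_nonneg_right h2 h5
      _ = C * dist a b / R := by rw [hC]; ring
  -- the ε-approximation
  have main : ∀ ε : ℝ, 0 < ε → dpl (g x) (g y) ≤
      ENNReal.ofReal (C * (dist x y + ε) / R) := by
    intro ε hε
    obtain ⟨γ, hγc, hγ0, hγ1, hγv⟩ := hpath x y ε hε
    -- uniform continuity
    have hunif := (isCompact_Icc (a := (0:ℝ)) (b := 1)).uniformContinuousOn_of_continuous hγc
    rw [Metric.uniformContinuousOn_iff] at hunif
    obtain ⟨δ, hδ0, hδ⟩ := hunif R hR
    obtain ⟨k', hk'⟩ := exists_nat_one_div_lt hδ0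
    set k : ℕ := k' + 1 with hk
    have hk0 : 0 < (k:ℝ) := by positivity
    have hkδ : 1 / (k:ℝ) < δ := by exact_mod_cast hk'
    set u : ℕ → ℝ := fun i => min ((i:ℝ) / k) 1 with hu
    have humono : Monotone u := by
      intro i j hij
      have hij' : (i:ℝ) ≤ (j:ℝ) := by exact_mod_cast hij
      exact min_le_min (by gcongr) le_rfl
    have humem : ∀ i, u i ∈ Icc (0:ℝ) 1 := by
      intro i
      constructor
      · exact le_min (by positivity) zero_le_one
      · exact min_le_right _ _
    have hu0 : u 0 = 0 := by simp [hu]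
    have huk : u k = 1 := by
      have : ((k:ℝ)) / (k:ℝ) = 1 := div_self (ne_of_gt hk0)
      simp [hu, this]
    have hustep : ∀ i, dist (u i) (u (i+1)) < δ := by
      intro i
      have h1 : u (i+1) - u i ≤ 1 / (k:ℝ) := by
        have hA : u (i+1) ≤ ((i:ℝ)+1) / k := by
          have e : u (i+1) = min ((((i+1):ℕ):ℝ) / k) 1 := rfl
          rw [e]
          refine (min_le_left _ _).trans (le_of_eq ?_)
          push_cast
          ring
        have e : u i = min ((i:ℝ)/k) 1 := rfl
        rcases min_cases ((i:ℝ)/k) 1 with ⟨h, _⟩ | ⟨h, _⟩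
        · have hui : u i = (i:ℝ)/k := by rw [e, h]
          have hid : ((i:ℝ)+1)/k - (i:ℝ)/k = 1/k := by field_simp; ring
          rw [hui]
          linarith
        · have hui : u i = 1 := by rw [e, h]
          have h2 : u (i+1) ≤ 1 := (humem (i+1)).2
          have h3 : 0 < 1/(k:ℝ) := by positivity
          rw [hui]
          linarith
      have h2 : 0 ≤ u (i+1) - u i := sub_nonneg.2 (humono (Nat.le_succ i))
      rw [Real.dist_eq, abs_sub_comm, abs_of_nonneg h2]
      linarith
    have hdist : ∀ i, dist (γ (u i)) (γ (u (i+1))) ≤ R := by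
      intro i
      exact le_of_lt (hδ _ (humem i) _ (humem (i+1)) (hustep i))
    -- chain of paths
    set z : ℕ → lp (fun _ : ↥𝒰 => ℝ) 2 := fun i => g (γ (u i)) with hz
    set L : ℕ → ℝ≥0∞ := fun i => ENNReal.ofReal (C * dist (γ (u i)) (γ (u (i+1))) / R) with hL
    have hchain := NervePathLe.chain z L k
      (fun i _ => pair (γ (u i)) (γ (u (i+1))) (hdist i)) (hgN _)
    have hz0 : z 0 = g x := by rw [hz]; simp only [hu0, hγ0]
    have hzk : z k = g y := by rw [hz]; simp only [huk, hγ1]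
    rw [hz0, hzk] at hchain
    refine le_trans (dpl_le _ _ _ hchain) ?_
    -- bound the sum
    have hsum1 : ∑ i ∈ Finset.range k, L i
        = ENNReal.ofReal (∑ i ∈ Finset.range k, C * dist (γ (u i)) (γ (u (i+1))) / R) := by
      rw [ENNReal.ofReal_sum_of_nonneg]
      intro i _
      positivity
    have hsum2 : ∑ i ∈ Finset.range k, dist (γ (u i)) (γ (u (i+1))) ≤ dist x y + ε := by
      have h1 := eVariationOn.sum_le (f := γ) (s := Icc (0:ℝ) 1) (n := k) humono humem
      have h2 : ∑ i ∈ Finset.range k, edist (γ (u (i+1))) (γ (u i))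
          = ENNReal.ofReal (∑ i ∈ Finset.range k, dist (γ (u i)) (γ (u (i+1)))) := by
        rw [ENNReal.ofReal_sum_of_nonneg (fun i _ => dist_nonneg)]
        apply Finset.sum_congr rfl
        intro i _
        rw [edist_dist, dist_comm]
      rw [h2] at h1
      have h3 := le_trans h1 hγv
      rw [ENNReal.ofReal_le_ofReal_iff (by positivity)] at h3
      exact h3
    rw [hsum1]
    apply ENNReal.ofReal_le_ofReal
    have : ∑ i ∈ Finset.range k, C * dist (γ (u i)) (γ (u (i+1))) / R
        = (C / R) * ∑ i ∈ Finset.range k, dist (γ (u i)) (γ (u (i+1))) := by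
      rw [Finset.mul_sum]
      apply Finset.sum_congr rfl
      intro i _
      ring
    rw [this]
    calc (C / R) * ∑ i ∈ Finset.range k, dist (γ (u i)) (γ (u (i+1)))
        ≤ (C / R) * (dist x y + ε) := by
          apply mul_le_mul_of_nonneg_left hsum2 (by positivity)
      _ = C * (dist x y + ε) / R := by ring
  -- take ε → 0
  have goal_eq : ENNReal.ofReal (12 * Real.sqrt (2 * (n:ℝ) + 1) * ((n:ℝ) + 1) * dist x y / R)
      = ENNReal.ofReal (C * dist x y / R) := by rw [hC]
  rw [show (12 * Real.sqrt (2 * (n:ℕ) + 1) * ((n:ℕ) + 1) * dist x y / R : ℝ)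
      = C * dist x y / R by rw [hC]]
  apply ENNReal.le_of_forall_pos_le_add
  intro η hη _
  have hε : (0:ℝ) < R * (η:ℝ) / C := by
    have : (0:ℝ) < (η:ℝ) := hη
    positivity
  refine le_trans (main _ hε) ?_
  have hco : C * (dist x y + R * (η:ℝ) / C) / R = C * dist x y / R + (η:ℝ) := by
    field_simp
  calc ENNReal.ofReal (C * (dist x y + R * (η:ℝ) / C) / R)
      = ENNReal.ofReal (C * dist x y / R + (η:ℝ)) := by rw [hco]
    _ = ENNReal.ofReal (C * dist x y / R) + ENNReal.ofReal ((η:ℝ)) :=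
        ENNReal.ofReal_add (by positivity) η.coe_nonneg
    _ = ENNReal.ofReal (C * dist x y / R) + (η : ℝ≥0∞) := by
        congr 1
        exact ENNReal.ofReal_coe_nnreal
    _ ≤ ENNReal.ofReal (C * dist x y / R) + (η : ℝ≥0∞) := le_rfl
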